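/- On the cotangent bundle of the 2-sphere, let J1 = s2*p3 - s3*p2, J2 = s3*p1 - s1*p3, J3 = s1*p2 - s2*p1, and define L1 = J3^2 + a1*s2^2/s1^2 + a2*s1^2/s2^2, L2 = J1^2 + a2*s3^2/s2^2 + a3*s2^2/s3^2, L3 = J2^2 + a3*s1^2/s3^2 + a1*s3^2/s1^2, H = L1 + L2 + L3 + a1 + a2 + a3, and R = {L1, L2}. Then, assuming the constraints s1^2 + s2^2 + s3^2 = 1 and s1*p1 + s2*p2 + s3*p3 = 0, the Casimir identity R^2 = 16*L1*L2*L3 - 16*a2*L3^2 - 16*a3*L1^2 - 16*a1*L2^2 + 64*a1*a2*a3 holds. -/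

import Mathlib

/-- Canonical Poisson bracket on phase space (s1, s2, s3, p1, p2, p3). -/
noncomputable def poissonBracket3 (F G : ℝ → ℝ → ℝ → ℝ → ℝ → ℝ → ℝ)
    (x y z p1 p2 p3 : ℝ) : ℝ :=
    deriv (fun t => F x y z t p2 p3) p1 * deriv (fun t => G t y z p1 p2 p3) x
  + deriv (fun t => F x y z p1 t p3) p2 * deriv (fun t => G x t z p1 p2 p3) y
  + deriv (fun t => F x y z p1 p2 t) p3 * deriv (fun t => G x y t p1 p2 p3) z
  - deriv (fun t => G x y z t p2 p3) p1 * deriv (fun t => F t y z p1 p2 p3) x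
  - deriv (fun t => G x y z p1 t p3) p2 * deriv (fun t => F x t z p1 p2 p3) y
  - deriv (fun t => G x y z p1 p2 t) p3 * deriv (fun t => F x y t p1 p2 p3) z

noncomputable def J1 (s1 s2 s3 p1 p2 p3 : ℝ) : ℝ := s2*p3 - s3*p2
noncomputable def J2 (s1 s2 s3 p1 p2 p3 : ℝ) : ℝ := s3*p1 - s1*p3
noncomputable def J3 (s1 s2 s3 p1 p2 p3 : ℝ) : ℝ := s1*p2 - s2*p1

noncomputable def L1f (a1 a2 : ℝ) (s1 s2 s3 p1 p2 p3 : ℝ) : ℝ :=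
  (J3 s1 s2 s3 p1 p2 p3)^2 + a1*s2^2/s1^2 + a2*s1^2/s2^2
noncomputable def L2f (a2 a3 : ℝ) (s1 s2 s3 p1 p2 p3 : ℝ) : ℝ :=
  (J1 s1 s2 s3 p1 p2 p3)^2 + a2*s3^2/s2^2 + a3*s2^2/s3^2
noncomputable def L3f (a1 a3 : ℝ) (s1 s2 s3 p1 p2 p3 : ℝ) : ℝ :=
  (J2 s1 s2 s3 p1 p2 p3)^2 + a3*s1^2/s3^2 + a1*s3^2/s1^2

lemma deriv_sq_lin (a b c x : ℝ) : deriv (fun t => (a*t+b)^2 + c) x = 2*(a*x+b)*a := by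
  have h : HasDerivAt (fun t : ℝ => (a*t+b)^2 + c)
      (((2:ℕ):ℝ) * (a*x+b)^(2-1) * (a*1)) x :=
    ((((hasDerivAt_id x).const_mul a).add_const b).pow 2).add_const c
  rw [h.deriv]; push_cast; ring

lemma deriv_full (a b c d e x : ℝ) (hx : x ≠ 0) :
    deriv (fun t => (a*t+b)^2 + c/t^2 + d*t^2 + e) x
      = 2*(a*x+b)*a - 2*c/x^3 + 2*d*x := by
  have h1 : HasDerivAt (fun t:ℝ => (a*t+b)^2) (((2:ℕ):ℝ)*(a*x+b)^(2-1)*(a*1)) x :=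
    (((hasDerivAt_id x).const_mul a).add_const b).pow 2
  have h2 : HasDerivAt (fun t:ℝ => c/t^2)
      ((0*x^2 - c*(((2:ℕ):ℝ)*x^(2-1)*1))/(x^2)^2) x :=
    (hasDerivAt_const x c).div ((hasDerivAt_id x).pow 2) (pow_ne_zero 2 hx)
  have h3 : HasDerivAt (fun t:ℝ => d*t^2) (d*(((2:ℕ):ℝ)*x^(2-1)*1)) x :=
    ((hasDerivAt_id x).pow 2).const_mul d
  have h : HasDerivAt (fun t => (a*t+b)^2 + c/t^2 + d*t^2 + e)
      (((2:ℕ):ℝ)*(a*x+b)^(2-1)*(a*1) + (0*x^2 - c*(((2:ℕ):ℝ)*x^(2-1)*1))/(x^2)^2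
        + d*(((2:ℕ):ℝ)*x^(2-1)*1)) x := ((h1.add h2).add h3).add_const e
  rw [h.deriv]; field_simp; ring

theorem S9_casimir (a1 a2 a3 : ℝ) (s1 s2 s3 p1 p2 p3 : ℝ)
    (h1 : s1 ≠ 0) (h2 : s2 ≠ 0) (h3 : s3 ≠ 0)
    (hsphere : s1^2 + s2^2 + s3^2 = 1)
    (htangent : s1*p1 + s2*p2 + s3*p3 = 0) :
    let L1 := L1f a1 a2 s1 s2 s3 p1 p2 p3
    let L2 := L2f a2 a3 s1 s2 s3 p1 p2 p3
    let L3 := L3f a1 a3 s1 s2 s3 p1 p2 p3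
    let H := L1 + L2 + L3 + a1 + a2 + a3
    let R := poissonBracket3 (L1f a1 a2) (L2f a2 a3) s1 s2 s3 p1 p2 p3
    R^2 = 16*L1*L2*L3 - 16*a2*L3^2 - 16*a3*L1^2 - 16*a1*L2^2 + 64*a1*a2*a3 := by
  intro L1 L2 L3 H R
  have eFp1 : deriv (fun t => L1f a1 a2 s1 s2 s3 t p2 p3) p1
      = 2*((-s2)*p1 + s1*p2)*(-s2) := by
    have hf : (fun t => L1f a1 a2 s1 s2 s3 t p2 p3)
        = fun t => ((-s2)*t + s1*p2)^2 + (a1*s2^2/s1^2 + a2*s1^2/s2^2) := by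
      funext t; simp only [L1f, J3]; ring
    rw [hf, deriv_sq_lin]
  have eFp2 : deriv (fun t => L1f a1 a2 s1 s2 s3 p1 t p3) p2
      = 2*(s1*p2 + (-(s2*p1)))*s1 := by
    have hf : (fun t => L1f a1 a2 s1 s2 s3 p1 t p3)
        = fun t => (s1*t + (-(s2*p1)))^2 + (a1*s2^2/s1^2 + a2*s1^2/s2^2) := by
      funext t; simp only [L1f, J3]; ring
    rw [hf, deriv_sq_lin]
  have eFp3 : deriv (fun t => L1f a1 a2 s1 s2 s3 p1 p2 t) p3 = 0 := by
    simp [L1f, J3]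
  have eFs1 : deriv (fun t => L1f a1 a2 t s2 s3 p1 p2 p3) s1
      = 2*(p2*s1 + (-(s2*p1)))*p2 - 2*(a1*s2^2)/s1^3 + 2*(a2/s2^2)*s1 := by
    have hf : (fun t => L1f a1 a2 t s2 s3 p1 p2 p3)
        = fun t => (p2*t + (-(s2*p1)))^2 + (a1*s2^2)/t^2 + (a2/s2^2)*t^2 + 0 := by
      funext t; simp only [L1f, J3]; ring
    rw [hf, deriv_full _ _ _ _ _ _ h1]
  have eFs2 : deriv (fun t => L1f a1 a2 s1 t s3 p1 p2 p3) s2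
      = 2*((-p1)*s2 + s1*p2)*(-p1) - 2*(a2*s1^2)/s2^3 + 2*(a1/s1^2)*s2 := by
    have hf : (fun t => L1f a1 a2 s1 t s3 p1 p2 p3)
        = fun t => ((-p1)*t + s1*p2)^2 + (a2*s1^2)/t^2 + (a1/s1^2)*t^2 + 0 := by
      funext t; simp only [L1f, J3]; ring
    rw [hf, deriv_full _ _ _ _ _ _ h2]
  have eFs3 : deriv (fun t => L1f a1 a2 s1 s2 t p1 p2 p3) s3 = 0 := by
    simp [L1f, J3]
  have eGp1 : deriv (fun t => L2f a2 a3 s1 s2 s3 t p2 p3) p1 = 0 := by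
    simp [L2f, J1]
  have eGp2 : deriv (fun t => L2f a2 a3 s1 s2 s3 p1 t p3) p2
      = 2*((-s3)*p2 + s2*p3)*(-s3) := by
    have hf : (fun t => L2f a2 a3 s1 s2 s3 p1 t p3)
        = fun t => ((-s3)*t + s2*p3)^2 + (a2*s3^2/s2^2 + a3*s2^2/s3^2) := by
      funext t; simp only [L2f, J1]; ring
    rw [hf, deriv_sq_lin]
  have eGp3 : deriv (fun t => L2f a2 a3 s1 s2 s3 p1 p2 t) p3
      = 2*(s2*p3 + (-(s3*p2)))*s2 := by
    have hf : (fun t => L2f a2 a3 s1 s2 s3 p1 p2 t)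
        = fun t => (s2*t + (-(s3*p2)))^2 + (a2*s3^2/s2^2 + a3*s2^2/s3^2) := by
      funext t; simp only [L2f, J1]; ring
    rw [hf, deriv_sq_lin]
  have eGs1 : deriv (fun t => L2f a2 a3 t s2 s3 p1 p2 p3) s1 = 0 := by
    simp [L2f, J1]
  have eGs2 : deriv (fun t => L2f a2 a3 s1 t s3 p1 p2 p3) s2
      = 2*(p3*s2 + (-(s3*p2)))*p3 - 2*(a2*s3^2)/s2^3 + 2*(a3/s3^2)*s2 := by
    have hf : (fun t => L2f a2 a3 s1 t s3 p1 p2 p3)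
        = fun t => (p3*t + (-(s3*p2)))^2 + (a2*s3^2)/t^2 + (a3/s3^2)*t^2 + 0 := by
      funext t; simp only [L2f, J1]; ring
    rw [hf, deriv_full _ _ _ _ _ _ h2]
  have eGs3 : deriv (fun t => L2f a2 a3 s1 s2 t p1 p2 p3) s3
      = 2*((-p2)*s3 + s2*p3)*(-p2) - 2*(a3*s2^2)/s3^3 + 2*(a2/s2^2)*s3 := by
    have hf : (fun t => L2f a2 a3 s1 s2 t p1 p2 p3)
        = fun t => ((-p2)*t + s2*p3)^2 + (a3*s2^2)/t^2 + (a2/s2^2)*t^2 + 0 := by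
      funext t; simp only [L2f, J1]; ring
    rw [hf, deriv_full _ _ _ _ _ _ h3]
  have hR : R = (2*(s1*p2 + (-(s2*p1)))*s1)
        * (2*(p3*s2 + (-(s3*p2)))*p3 - 2*(a2*s3^2)/s2^3 + 2*(a3/s3^2)*s2)
      - (2*((-s3)*p2 + s2*p3)*(-s3))
        * (2*((-p1)*s2 + s1*p2)*(-p1) - 2*(a2*s1^2)/s2^3 + 2*(a1/s1^2)*s2) := by
    show poissonBracket3 (L1f a1 a2) (L2f a2 a3) s1 s2 s3 p1 p2 p3 = _
    unfold poissonBracket3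
    rw [eFp1, eFp2, eFp3, eFs1, eFs2, eFs3, eGp1, eGp2, eGp3, eGs1, eGs2, eGs3]
    ring
  show R^2 = 16*L1*L2*L3 - 16*a2*L3^2 - 16*a3*L1^2 - 16*a1*L2^2 + 64*a1*a2*a3
  rw [hR]
  show _ = 16*(L1f a1 a2 s1 s2 s3 p1 p2 p3)*(L2f a2 a3 s1 s2 s3 p1 p2 p3)*(L3f a1 a3 s1 s2 s3 p1 p2 p3)
      - 16*a2*(L3f a1 a3 s1 s2 s3 p1 p2 p3)^2 - 16*a3*(L1f a1 a2 s1 s2 s3 p1 p2 p3)^2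
      - 16*a1*(L2f a2 a3 s1 s2 s3 p1 p2 p3)^2 + 64*a1*a2*a3
  simp only [L1f, L2f, L3f, J1, J2, J3]
  field_simp
  ring
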